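/- If a sequent J = (Γ ⇒ Δ) is derivable in the cut-free sequent calculus LK⁻, then every J-interpretation satisfies J; that is, for every structure S, every S-assignment A of the free variables of J, and every S-subvaluation assigning a truth value to each formula of J at A, if all formulas of Γ are assigned true then some formula of Δ is assigned true. -/
import Mathlib


open FirstOrder FirstOrder.Language

namespace PaperSat

variable {L : Language} {α : Type*}

/-- A formula in context: a bounded formula together with its number of bound variables. -/
abbrev Fml (L : Language) (α : Type*) : Type _ := Σ n, L.BoundedFormula α n

/-- `Sub φ ψ` means that `φ` is a subformula (or subexpression) of `ψ`. -/
inductive Sub {L : Language} {α : Type*} : Fml L α → Fml L α → Prop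
  | refl (φ : Fml L α) : Sub φ φ
  | impLeft {φ : Fml L α} {n : ℕ} (f g : L.BoundedFormula α n) :
      Sub φ ⟨n, f⟩ → Sub φ ⟨n, f.imp g⟩
  | impRight {φ : Fml L α} {n : ℕ} (f g : L.BoundedFormula α n) :
      Sub φ ⟨n, g⟩ → Sub φ ⟨n, f.imp g⟩
  | allOf {φ : Fml L α} {n : ℕ} (f : L.BoundedFormula α (n + 1)) :
      Sub φ ⟨n + 1, f⟩ → Sub φ ⟨n, f.all⟩

/-- Membership in the subformula closure of a class `Φ` of formulas. -/
def InCl (Φ : Set (Fml L α)) (φ : Fml L α) : Prop := ∃ ψ ∈ Φ, Sub φ ψ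

variable (M : Type*) [L.Structure M]

/-- `IsSatRel M Φ T` says that `T` is a `Φ`-satisfaction relation for the structure `M`:
a relation on pairs consisting of a subformula of a member of `Φ` and an assignment,
satisfying the usual Tarskian recursion clauses. -/
def IsSatRel (Φ : Set (Fml L α))
    (T : ∀ n, L.BoundedFormula α n → (α → M) → (Fin n → M) → Prop) : Prop :=
  (∀ (n : ℕ) (v : α → M) (xs : Fin n → M), InCl Φ ⟨n, BoundedFormula.falsum⟩ →
      ¬ T n BoundedFormula.falsum v xs) ∧
  (∀ (n : ℕ) (t₁ t₂ : L.Term (α ⊕ Fin n)) (v : α → M) (xs : Fin n → M),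
      InCl Φ ⟨n, t₁.bdEqual t₂⟩ →
      (T n (t₁.bdEqual t₂) v xs ↔ t₁.realize (Sum.elim v xs) = t₂.realize (Sum.elim v xs))) ∧
  (∀ (n l : ℕ) (R : L.Relations l) (ts : Fin l → L.Term (α ⊕ Fin n)) (v : α → M)
      (xs : Fin n → M), InCl Φ ⟨n, BoundedFormula.rel R ts⟩ →
      (T n (BoundedFormula.rel R ts) v xs ↔
        Structure.RelMap R fun i => (ts i).realize (Sum.elim v xs))) ∧
  (∀ (n : ℕ) (f g : L.BoundedFormula α n) (v : α → M) (xs : Fin n → M),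
      InCl Φ ⟨n, f.imp g⟩ → (T n (f.imp g) v xs ↔ (T n f v xs → T n g v xs))) ∧
  (∀ (n : ℕ) (f : L.BoundedFormula α (n + 1)) (v : α → M) (xs : Fin n → M),
      InCl Φ ⟨n, f.all⟩ → (T n f.all v xs ↔ ∀ x : M, T (n + 1) f v (Fin.snoc xs x)))

end PaperSat

namespace PaperLK

open FirstOrder FirstOrder.Language

variable {L : Language}

/-- Instantiation of the bound variable of a formula with one extra bound variable
by a term with free variables in `ℕ`. -/
def inst1 (f : L.BoundedFormula ℕ 1) (t : L.Term ℕ) : L.Formula ℕ :=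
  f.toFormula.subst (Sum.elim Term.var fun _ => t)

/-- The equality formula between two terms, as a formula with free variables in `ℕ`. -/
def eqT (t u : L.Term ℕ) : L.Formula ℕ :=
  (t.relabel Sum.inl).bdEqual (u.relabel Sum.inl)

/-- Gentzen's sequent calculus `LK` for classical first-order logic, on sequents of formulas
with free variables in `ℕ`.  The boolean parameter `cut` controls whether the cut rule is
available (`LK false eq` is the cut-free calculus `LK⁻`), and the boolean parameter `eq`
controls whether the rules for the identity predicate are available (`eq = false` gives logic
without identity). -/
inductive LK (cut eq : Bool) : List (L.Formula ℕ) → List (L.Formula ℕ) → Prop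
  | ax (φ : L.Formula ℕ) : LK cut eq [φ] [φ]
  | falsumL : LK cut eq [⊥] []
  | wL {Γ Δ} (φ) : LK cut eq Γ Δ → LK cut eq (φ :: Γ) Δ
  | wR {Γ Δ} (φ) : LK cut eq Γ Δ → LK cut eq Γ (Δ ++ [φ])
  | cL {Γ Δ} {φ} : LK cut eq (φ :: φ :: Γ) Δ → LK cut eq (φ :: Γ) Δ
  | cR {Γ Δ} {φ} : LK cut eq Γ (Δ ++ [φ, φ]) → LK cut eq Γ (Δ ++ [φ])
  | eL {Γ₁ Γ₂ Δ} {φ ψ} : LK cut eq (Γ₁ ++ φ :: ψ :: Γ₂) Δ → LK cut eq (Γ₁ ++ ψ :: φ :: Γ₂) Δ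
  | eR {Γ Δ₁ Δ₂} {φ ψ} : LK cut eq Γ (Δ₁ ++ φ :: ψ :: Δ₂) → LK cut eq Γ (Δ₁ ++ ψ :: φ :: Δ₂)
  | impL {Γ Γ' Δ Δ'} {f g : L.Formula ℕ} :
      LK cut eq Γ (Δ ++ [f]) → LK cut eq (g :: Γ') Δ' →
      LK cut eq ((f.imp g) :: (Γ ++ Γ')) (Δ ++ Δ')
  | impR {Γ Δ} {f g : L.Formula ℕ} :
      LK cut eq (f :: Γ) (Δ ++ [g]) → LK cut eq Γ (Δ ++ [f.imp g])
  | allL {Γ Δ} {f : L.BoundedFormula ℕ 1} (t : L.Term ℕ) :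
      LK cut eq ((inst1 f t) :: Γ) Δ → LK cut eq ((BoundedFormula.all f) :: Γ) Δ
  | allR {Γ Δ} {f : L.BoundedFormula ℕ 1} (k : ℕ)
      (hfresh : ∀ ψ ∈ (BoundedFormula.all f) :: (Γ ++ Δ), k ∉ ψ.freeVarFinset) :
      LK cut eq Γ (Δ ++ [inst1 f (Term.var k)]) →
      LK cut eq Γ (Δ ++ [BoundedFormula.all f])
  | cut' {Γ Γ' Δ Δ'} {φ : L.Formula ℕ} (hc : cut = true) :
      LK cut eq Γ (Δ ++ [φ]) → LK cut eq (φ :: Γ') Δ' → LK cut eq (Γ ++ Γ') (Δ ++ Δ')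
  | eqRefl (he : eq = true) (t : L.Term ℕ) : LK cut eq [] [eqT t t]
  | eqSubst {Γ Δ} {f : L.BoundedFormula ℕ 1} (he : eq = true) (t u : L.Term ℕ) :
      LK cut eq Γ (Δ ++ [inst1 f t]) → LK cut eq ((eqT t u) :: Γ) (Δ ++ [inst1 f u])

/-- Provability of a formula from a theory (a class of formulas), via the full sequent
calculus (with cut and with the rules for identity). -/
def ThmOf (Θ : Set (L.Formula ℕ)) (σ : L.Formula ℕ) : Prop :=
  ∃ Γ : List (L.Formula ℕ), (∀ γ ∈ Γ, γ ∈ Θ) ∧ LK true true Γ [σ]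

/-- A formula is a sentence if it has no free variables. -/
def ClosedF (φ : L.Formula ℕ) : Prop := φ.freeVarFinset = ∅

/-- A theory is consistent if there is no sentence such that both it and its negation
are provable. -/
def ConsistentT (Θ : Set (L.Formula ℕ)) : Prop :=
  ¬ ∃ σ : L.Formula ℕ, ClosedF σ ∧ ThmOf Θ σ ∧ ThmOf Θ σ.not

/-- The class of formulas not containing the identity predicate. -/
inductive EqFree : ∀ {n : ℕ}, L.BoundedFormula ℕ n → Prop
  | falsum {n} : EqFree (n := n) BoundedFormula.falsum
  | rel {n l} (R : L.Relations l) (ts : Fin l → L.Term (ℕ ⊕ Fin n)) :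
      EqFree (BoundedFormula.rel R ts)
  | imp {n} {f g : L.BoundedFormula ℕ n} : EqFree f → EqFree g → EqFree (f.imp g)
  | all {n} {f : L.BoundedFormula ℕ (n + 1)} : EqFree f → EqFree (BoundedFormula.all f)

end PaperLK

namespace PaperSat

open FirstOrder FirstOrder.Language

variable {L : Language}

/-- `IsSubVal M Tt Tf` says that the pair of predicates `Tt` (assigned the value *true*) and
`Tf` (assigned the value *false*) is a subvaluation for the structure `M`: a partial
assignment of truth values to formula–assignment pairs that is consistent with the Tarskian
clauses in the weak sense (e.g. a disjunction may be assigned *true* provided at least one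
disjunct is assigned *true*, and may be assigned *false* only if both disjuncts are). -/
def IsSubVal (M : Type*) [L.Structure M]
    (Tt Tf : ∀ n, L.BoundedFormula ℕ n → (ℕ → M) → (Fin n → M) → Prop) : Prop :=
  (∀ n φ v xs, ¬ (Tt n φ v xs ∧ Tf n φ v xs)) ∧
  (∀ (n : ℕ) (v : ℕ → M) (xs : Fin n → M), ¬ Tt n BoundedFormula.falsum v xs) ∧
  (∀ (n : ℕ) (t₁ t₂ : L.Term (ℕ ⊕ Fin n)) (v : ℕ → M) (xs : Fin n → M),
    (Tt n (t₁.bdEqual t₂) v xs → t₁.realize (Sum.elim v xs) = t₂.realize (Sum.elim v xs)) ∧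
    (Tf n (t₁.bdEqual t₂) v xs → t₁.realize (Sum.elim v xs) ≠ t₂.realize (Sum.elim v xs))) ∧
  (∀ (n l : ℕ) (R : L.Relations l) (ts : Fin l → L.Term (ℕ ⊕ Fin n)) (v : ℕ → M)
      (xs : Fin n → M),
    (Tt n (BoundedFormula.rel R ts) v xs →
      Structure.RelMap R (fun i => (ts i).realize (Sum.elim v xs))) ∧
    (Tf n (BoundedFormula.rel R ts) v xs →
      ¬ Structure.RelMap R (fun i => (ts i).realize (Sum.elim v xs)))) ∧
  (∀ (n : ℕ) (f g : L.BoundedFormula ℕ n) (v : ℕ → M) (xs : Fin n → M),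
    (Tt n (f.imp g) v xs → (Tf n f v xs ∨ Tt n g v xs)) ∧
    (Tf n (f.imp g) v xs → (Tt n f v xs ∧ Tf n g v xs))) ∧
  (∀ (n : ℕ) (f : L.BoundedFormula ℕ (n + 1)) (v : ℕ → M) (xs : Fin n → M),
    (Tt n (BoundedFormula.all f) v xs → ∀ x : M, Tt (n + 1) f v (Fin.snoc xs x)) ∧
    (Tf n (BoundedFormula.all f) v xs → ∃ x : M, Tf (n + 1) f v (Fin.snoc xs x)))

end PaperSat

namespace PaperSat

open PaperLK

section Aux

variable {L : Language} {M : Type} [L.Structure M]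

/-- Term realization only depends on the values of the variables occurring in the term. -/
theorem term_realize_congr {n : ℕ} (t : L.Term (ℕ ⊕ Fin n)) {v w : ℕ → M} {xs : Fin n → M}
    (h : ∀ a ∈ t.varFinsetLeft, v a = w a) :
    t.realize (Sum.elim v xs) = t.realize (Sum.elim w xs) := by
  induction t with
  | var i =>
    cases i with
    | inl a => simpa using h a (by simp)
    | inr b => rfl
  | func f ts ih =>
    simp only [Term.realize]
    congr 1
    funext i
    exact ih i fun a ha => h a (by simp [Term.varFinsetLeft]; exact ⟨i, ha⟩)

/-- Formula realization only depends on the values of the free variables. -/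
theorem realize_congr : ∀ {n : ℕ} (φ : L.BoundedFormula ℕ n) {v w : ℕ → M} {xs : Fin n → M},
    (∀ a ∈ φ.freeVarFinset, v a = w a) → (φ.Realize v xs ↔ φ.Realize w xs) := by
  intro n φ
  induction φ with
  | falsum => intro v w xs _; rfl
  | equal t₁ t₂ =>
    intro v w xs h
    have h₁ := term_realize_congr (M := M) t₁ (v := v) (w := w) (xs := xs)
      fun a ha => h a (by simp [ha])
    have h₂ := term_realize_congr (M := M) t₂ (v := v) (w := w) (xs := xs)
      fun a ha => h a (by simp [ha])
    simp only [BoundedFormula.Realize, h₁, h₂]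
  | rel R ts =>
    intro v w xs h
    simp only [BoundedFormula.Realize]
    have : (fun i => (ts i).realize (Sum.elim v xs)) =
        fun i => (ts i).realize (Sum.elim w xs) := by
      funext i
      exact term_realize_congr _ fun a ha => h a (by simp; exact ⟨i, ha⟩)
    rw [this]
  | imp f g ihf ihg =>
    intro v w xs h
    simp only [BoundedFormula.realize_imp]
    rw [ihf fun a ha => h a (by simp [ha]), ihg fun a ha => h a (by simp [ha])]
  | all f ih =>
    intro v w xs h
    simp only [BoundedFormula.realize_all]
    exact forall_congr' fun x => ih fun a ha => h a (by simpa using ha)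

/-- A subvaluation is faithful: anything assigned *true* is true, anything assigned
*false* is false. -/
theorem subval_faithful {Tt Tf : ∀ n, L.BoundedFormula ℕ n → (ℕ → M) → (Fin n → M) → Prop}
    (hsv : IsSubVal M Tt Tf) :
    ∀ {n : ℕ} (φ : L.BoundedFormula ℕ n) (v : ℕ → M) (xs : Fin n → M),
      (Tt n φ v xs → φ.Realize v xs) ∧ (Tf n φ v xs → ¬ φ.Realize v xs) := by
  obtain ⟨-, hfal, heq, hrel, himp, hall⟩ := hsv
  intro n φ
  induction φ with
  | falsum =>
    intro v xs
    exact ⟨fun h => absurd h (hfal _ v xs), fun _ h => h⟩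
  | equal t₁ t₂ =>
    intro v xs
    exact ⟨fun h => (heq _ t₁ t₂ v xs).1 h, fun h => (heq _ t₁ t₂ v xs).2 h⟩
  | rel R ts =>
    intro v xs
    exact ⟨fun h => (hrel _ _ R ts v xs).1 h, fun h => (hrel _ _ R ts v xs).2 h⟩
  | imp f g ihf ihg =>
    intro v xs
    constructor
    · intro h
      rw [BoundedFormula.realize_imp]
      intro hf
      rcases (himp _ f g v xs).1 h with h' | h'
      · exact absurd hf ((ihf v xs).2 h')
      · exact (ihg v xs).1 h'
    · intro h
      rw [BoundedFormula.realize_imp]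
      obtain ⟨h1, h2⟩ := (himp _ f g v xs).2 h
      intro hcontra
      exact (ihg v xs).2 h2 (hcontra ((ihf v xs).1 h1))
  | all f ih =>
    intro v xs
    constructor
    · intro h
      rw [BoundedFormula.realize_all]
      intro x
      exact (ih v (Fin.snoc xs x)).1 ((hall _ f v xs).1 h x)
    · intro h
      rw [BoundedFormula.realize_all]
      obtain ⟨x, hx⟩ := (hall _ f v xs).2 h
      intro hcontra
      exact (ih v (Fin.snoc xs x)).2 hx (hcontra x)

/-- Realization of a one-variable instantiation. -/
theorem realize_inst1 {M : Type} [L.Structure M]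
    (f : L.BoundedFormula ℕ 1) (t : L.Term ℕ) (v : ℕ → M) (xs : Fin 0 → M) :
    BoundedFormula.Realize (inst1 f t) v xs ↔ f.Realize v (fun _ => t.realize v) := by
  have h0 : xs = default := Subsingleton.elim _ _
  subst h0
  have : BoundedFormula.Realize (inst1 f t) v default ↔ Formula.Realize (inst1 f t) v := Iff.rfl
  rw [this, inst1]
  rw [show Formula.Realize (BoundedFormula.subst f.toFormula (Sum.elim Term.var fun _ => t)) v =
      BoundedFormula.Realize (BoundedFormula.subst f.toFormula (Sum.elim Term.var fun _ => t))
        v default from rfl]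
  rw [BoundedFormula.realize_subst]
  rw [show BoundedFormula.Realize f.toFormula
        (fun a => Term.realize v (Sum.elim Term.var (fun _ => t) a)) default =
      Formula.Realize f.toFormula
        (fun a => Term.realize v (Sum.elim Term.var (fun _ => t) a)) from rfl]
  rw [BoundedFormula.realize_toFormula]
  exact Iff.rfl

/-- Any function `Fin 1 → M` equals a `snoc`. -/
theorem snoc_eq_const {M : Type} (x : M) :
    (Fin.snoc (fun i : Fin 0 => i.elim0) x : Fin 1 → M) = fun _ => x := by
  funext i
  rw [Fin.fin_one_eq_zero i]
  simp [Fin.snoc]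

end Aux

/-- Soundness of the cut-free, identity-free calculus with respect to ordinary Tarskian
semantics. -/
theorem LK_sound {L : Language} {Γ Δ : List (L.Formula ℕ)}
    (h : LK (L := L) false false Γ Δ) (M : Type) [L.Structure M] (v : ℕ → M)
    (hΓ : ∀ φ ∈ Γ, BoundedFormula.Realize φ v (fun i : Fin 0 => i.elim0)) :
    ∃ φ ∈ Δ, BoundedFormula.Realize φ v (fun i : Fin 0 => i.elim0) := by
  induction h generalizing v with
  | ax φ => exact ⟨φ, by simp, hΓ φ (by simp)⟩
  | falsumL => exact absurd (hΓ ⊥ (by simp)) (by simp)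
  | wL φ h1 ih => exact ih v fun ψ hψ => hΓ ψ (by simp [hψ])
  | wR φ h1 ih =>
    obtain ⟨ψ, hψ, hr⟩ := ih v hΓ
    exact ⟨ψ, by simp [hψ], hr⟩
  | cL h1 ih =>
    refine ih v fun ψ hψ => hΓ ψ ?_
    simp only [List.mem_cons] at hψ ⊢
    tauto
  | cR h1 ih =>
    obtain ⟨ψ, hψ, hr⟩ := ih v hΓ
    refine ⟨ψ, ?_, hr⟩
    simp only [List.mem_append, List.mem_cons, List.mem_singleton, List.not_mem_nil,
      or_false] at hψ ⊢
    tauto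
  | eL h1 ih =>
    refine ih v fun χ hχ => hΓ χ ?_
    simp only [List.mem_append, List.mem_cons] at hχ ⊢
    tauto
  | eR h1 ih =>
    obtain ⟨χ, hχ, hr⟩ := ih v hΓ
    refine ⟨χ, ?_, hr⟩
    simp only [List.mem_append, List.mem_cons] at hχ ⊢
    tauto
  | @impL Γ Γ' Δ Δ' f g h1 h2 ih1 ih2 =>
    have himp := hΓ (f.imp g) (by simp)
    rw [BoundedFormula.realize_imp] at himp
    obtain ⟨ψ, hψ, hr⟩ := ih1 v fun ψ hψ => hΓ ψ (by simp [hψ])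
    rcases List.mem_append.mp hψ with h' | h'
    · exact ⟨ψ, by simp [h'], hr⟩
    · rw [List.mem_singleton] at h'
      subst h'
      obtain ⟨χ, hχ, hrχ⟩ := ih2 v fun χ hχ => by
        rcases List.mem_cons.mp hχ with h'' | h''
        · exact h'' ▸ himp hr
        · exact hΓ χ (by simp [h''])
      exact ⟨χ, by simp [hχ], hrχ⟩
  | @impR Γ Δ f g h1 ih =>
    by_cases hf : BoundedFormula.Realize f v (fun i : Fin 0 => i.elim0)
    · obtain ⟨ψ, hψ, hr⟩ := ih v fun ψ hψ => by
        rcases List.mem_cons.mp hψ with h' | h'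
        · exact h' ▸ hf
        · exact hΓ ψ h'
      rcases List.mem_append.mp hψ with h' | h'
      · exact ⟨ψ, by simp [h'], hr⟩
      · rw [List.mem_singleton] at h'
        subst h'
        exact ⟨f.imp ψ, by simp, by rw [BoundedFormula.realize_imp]; exact fun _ => hr⟩
    · exact ⟨f.imp g, by simp,
        by rw [BoundedFormula.realize_imp]; exact fun h => absurd h hf⟩
  | @allL Γ Δ f t h1 ih =>
    refine ih v fun ψ hψ => ?_
    rcases List.mem_cons.mp hψ with h' | h'
    · subst h'
      have hall := hΓ (BoundedFormula.all f) (by simp)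
      rw [BoundedFormula.realize_all] at hall
      rw [realize_inst1]
      have := hall (t.realize v)
      rwa [snoc_eq_const] at this
    · exact hΓ ψ (by simp [h'])
  | @allR Γ Δ f k hfresh h1 ih =>
    by_cases hD : ∃ ψ ∈ Δ, BoundedFormula.Realize ψ v (fun i : Fin 0 => i.elim0)
    · obtain ⟨ψ, hψ, hr⟩ := hD
      exact ⟨ψ, by simp [hψ], hr⟩
    · push_neg at hD
      refine ⟨BoundedFormula.all f, by simp, ?_⟩
      rw [BoundedFormula.realize_all]
      intro x
      set v' := Function.update v k x with hv'
      have hagree : ∀ (ψ : L.Formula ℕ), k ∉ ψ.freeVarFinset →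
          ∀ a ∈ ψ.freeVarFinset, v a = v' a := by
        intro ψ hk a ha
        rw [hv', Function.update_of_ne (by rintro rfl; exact hk ha)]
      obtain ⟨ψ, hψ, hr⟩ := ih v' fun ψ hψ =>
        (realize_congr ψ (hagree ψ (hfresh ψ (by simp [hψ])))).mp (hΓ ψ hψ)
      rcases List.mem_append.mp hψ with h' | h'
      · exact absurd ((realize_congr ψ (hagree ψ (hfresh ψ (by simp [h'])))).mpr hr)
          (hD ψ h')
      · rw [List.mem_singleton] at h'
        subst h'
        rw [realize_inst1] at hr
        have hvk : (Term.var k : L.Term ℕ).realize v' = x := by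
          simp [Term.realize, hv']
        rw [hvk] at hr
        have hkf : k ∉ (BoundedFormula.all f).freeVarFinset :=
          hfresh (BoundedFormula.all f) (by simp)
        have hkf' : k ∉ f.freeVarFinset := by simpa using hkf
        have hfin : f.Realize v (fun _ : Fin 1 => x) := by
          refine (realize_congr f ?_).mpr hr
          intro a ha
          rw [hv', Function.update_of_ne (by rintro rfl; exact hkf' ha)]
        rwa [snoc_eq_const]
  | cut' hc h1 h2 ih1 ih2 => simp at hc
  | eqRefl he t => simp at he
  | eqSubst he t u h1 ih => simp at he

/-- (Soundness of cut-free `LK⁻` for `J`-interpretations, in logic without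
identity.)  If the sequent `J = (Γ ⇒ Δ)` is derivable in the cut-free calculus `LK⁻`, then
every `J`-interpretation satisfies `J`: for every structure `M`, every assignment `v` of the
free variables, and every subvaluation assigning a truth value to each formula of `J` at `v`,
if all formulas of `Γ` are assigned *true* then some formula of `Δ` is assigned *true*. -/
theorem LKminus_sound_for_J_interpretations (L : Language) (Γ Δ : List (L.Formula ℕ))
    (hEq : ∀ φ ∈ Γ ++ Δ, EqFree φ) (h : LK (L := L) false false Γ Δ) :
    ∀ (M : Type) (_ : L.Structure M) (v : ℕ → M)
      (Tt Tf : ∀ n, L.BoundedFormula ℕ n → (ℕ → M) → (Fin n → M) → Prop),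
      IsSubVal M Tt Tf →
      (∀ φ ∈ Γ ++ Δ, Tt 0 φ v (fun i => i.elim0) ∨ Tf 0 φ v (fun i => i.elim0)) →
      (∀ φ ∈ Γ, Tt 0 φ v (fun i => i.elim0)) →
      ∃ φ ∈ Δ, Tt 0 φ v (fun i => i.elim0) := by
  intro M _ v Tt Tf hsv htotal hΓ
  obtain ⟨δ, hδ, hr⟩ := LK_sound h M v fun φ hφ =>
    (subval_faithful hsv φ v _).1 (hΓ φ hφ)
  refine ⟨δ, hδ, ?_⟩
  rcases htotal δ (by simp [hδ]) with h' | h'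
  · exact h'
  · exact absurd hr ((subval_faithful hsv δ v _).2 h')

end PaperSat
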